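/- Let a be a non-constant binary sequence of period n ≥ 2. Then for any 1 ≤ t ≤ n-1 and any 1 ≤ τ ≤ n-1, the arithmetic autocorrelation satisfies A_a(τ) = A_{a^{(t)}}(τ); i.e., the arithmetic autocorrelation at a fixed shift τ is invariant under cyclic shifts of the sequence. -/

import Mathlib

def w2 (a : ℕ) : ℕ := (Nat.digits 2 a).sum

def sigma (n : ℕ) (a : ℕ → ℕ) : ℕ := ∑ l ∈ Finset.range n, a l * 2 ^ l

/-- arithmetic autocorrelation of the sequence `a` at shift `τ` -/
def arithAC (n : ℕ) (a : ℕ → ℕ) (τ : ℕ) : ℤ :=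
  if sigma n a > sigma n (fun l => a (l + τ)) then
    2 * w2 (sigma n a - sigma n (fun l => a (l + τ))) - (n : ℤ)
  else
    (n : ℤ) - 2 * w2 (sigma n (fun l => a (l + τ)) - sigma n a)


lemma w2_two_mul (x : ℕ) : w2 (2 * x) = w2 x := by
  rcases Nat.eq_zero_or_pos x with h | h
  · simp [h]
  · unfold w2
    rw [Nat.digits_def' (by norm_num : (1:ℕ) < 2) (by omega)]
    have h1 : 2 * x % 2 = 0 := by omega
    have h2 : 2 * x / 2 = x := by omega
    rw [h1, h2]
    simp

lemma w2_two_mul_add_one (x : ℕ) : w2 (2 * x + 1) = w2 x + 1 := by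
  unfold w2
  rw [Nat.digits_def' (by norm_num : (1:ℕ) < 2) (by omega)]
  have h1 : (2 * x + 1) % 2 = 1 := by omega
  have h2 : (2 * x + 1) / 2 = x := by omega
  rw [h1, h2]
  simp [Nat.add_comm]

lemma w2_pow_add : ∀ k r : ℕ, r < 2 ^ k → w2 (2 ^ k + r) = w2 r + 1 := by
  intro k
  induction k with
  | zero =>
      intro r h
      interval_cases r
      simp [w2]
  | succ k ih =>
      intro r h
      have hp : (2:ℕ) ^ (k+1) = 2 * 2 ^ k := by ring
      have h2 : r / 2 < 2 ^ k := by omega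
      rcases Nat.mod_two_eq_zero_or_one r with h0 | h0
      · have e1 : 2 ^ (k+1) + r = 2 * (2 ^ k + r / 2) := by omega
        have e2 : r = 2 * (r / 2) := by omega
        rw [e1, w2_two_mul, ih _ h2]
        conv_rhs => rw [e2, w2_two_mul]
      · have e1 : 2 ^ (k+1) + r = 2 * (2 ^ k + r / 2) + 1 := by omega
        have e2 : r = 2 * (r / 2) + 1 := by omega
        rw [e1, w2_two_mul_add_one, ih _ h2]
        conv_rhs => rw [e2, w2_two_mul_add_one]

lemma w2_compl : ∀ n x : ℕ, x ≤ 2 ^ n - 1 → w2 x + w2 (2 ^ n - 1 - x) = n := by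
  intro n
  induction n with
  | zero =>
      intro x h
      have : x = 0 := by omega
      simp [this, w2]
  | succ n ih =>
      intro x h
      have hp : (2:ℕ) ^ (n+1) = 2 * 2 ^ n := by ring
      have hq : 1 ≤ (2:ℕ) ^ n := Nat.one_le_two_pow
      have hq2 : x / 2 ≤ 2 ^ n - 1 := by omega
      have key := ih (x / 2) hq2
      rcases Nat.mod_two_eq_zero_or_one x with h0 | h0
      · obtain ⟨q, rfl⟩ : ∃ q, x = 2 * q := ⟨x / 2, by omega⟩
        have hq2' : q ≤ 2 ^ n - 1 := by omega
        have key := ih q hq2'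
        have e2 : 2 ^ (n+1) - 1 - 2 * q = 2 * (2 ^ n - 1 - q) + 1 := by omega
        rw [e2, w2_two_mul_add_one, w2_two_mul]
        omega
      · obtain ⟨q, rfl⟩ : ∃ q, x = 2 * q + 1 := ⟨x / 2, by omega⟩
        have hq2' : q ≤ 2 ^ n - 1 := by omega
        have key := ih q hq2'
        have e2 : 2 ^ (n+1) - 1 - (2 * q + 1) = 2 * (2 ^ n - 1 - q) := by omega
        rw [e2, w2_two_mul, w2_two_mul_add_one]
        omega


lemma sum_two_pow (n : ℕ) : ∑ l ∈ Finset.range n, 2 ^ l = 2 ^ n - 1 := by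
  induction n with
  | zero => simp
  | succ n ih =>
      rw [Finset.sum_range_succ, ih]
      have h : 1 ≤ (2:ℕ) ^ n := Nat.one_le_two_pow
      have hp : (2:ℕ) ^ (n+1) = 2 * 2 ^ n := by ring
      omega

lemma sigma_lt (n : ℕ) (a : ℕ → ℕ) (h : ∀ l, a l ≤ 1) : sigma n a < 2 ^ n := by
  induction n with
  | zero => simp [sigma]
  | succ n ih =>
      have e : sigma (n+1) a = sigma n a + a n * 2 ^ n := Finset.sum_range_succ _ _
      have h3 : a n * 2 ^ n ≤ 2 ^ n := by
        calc a n * 2 ^ n ≤ 1 * 2 ^ n := Nat.mul_le_mul_right _ (h n)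
          _ = 2 ^ n := one_mul _
      have hp : (2:ℕ) ^ (n+1) = 2 * 2 ^ n := by ring
      omega

lemma sigma_pos (n : ℕ) (a : ℕ → ℕ) (h : ∃ l < n, a l ≠ 0) : 1 ≤ sigma n a := by
  obtain ⟨l, hl, hal⟩ := h
  have h1 : a l * 2 ^ l ≤ sigma n a :=
    Finset.single_le_sum (f := fun l => a l * 2 ^ l) (fun i _ => Nat.zero_le _)
      (Finset.mem_range.mpr hl)
  have h2 : 0 < a l * 2 ^ l := Nat.mul_pos (by omega) (Nat.pow_pos (by norm_num))
  omega

lemma sigma_le (n : ℕ) (a : ℕ → ℕ) (hb : ∀ l, a l ≤ 1) (h : ∃ l < n, a l ≠ 1) :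
    sigma n a ≤ 2 ^ n - 2 := by
  obtain ⟨l0, hl0, h0⟩ := h
  have h00 : a l0 = 0 := by have := hb l0; omega
  have hlt : sigma n a < ∑ l ∈ Finset.range n, 2 ^ l := by
    refine Finset.sum_lt_sum (fun i _ => ?_) ⟨l0, Finset.mem_range.mpr hl0, ?_⟩
    · calc a i * 2 ^ i ≤ 1 * 2 ^ i := Nat.mul_le_mul_right _ (hb i)
        _ = 2 ^ i := one_mul _
    · rw [h00]
      simpa using Nat.pow_pos (n := l0) (by norm_num : 0 < 2)
  rw [sum_two_pow] at hlt
  omega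

lemma sigma_inj (a b : ℕ → ℕ) (ha : ∀ l, a l ≤ 1) (hb : ∀ l, b l ≤ 1) :
    ∀ n, sigma n a = sigma n b → ∀ l < n, a l = b l := by
  intro n
  induction n with
  | zero => intro _ l hl; omega
  | succ n ih =>
      intro h l hl
      have e1 : sigma (n+1) a = sigma n a + a n * 2 ^ n := Finset.sum_range_succ _ _
      have e2 : sigma (n+1) b = sigma n b + b n * 2 ^ n := Finset.sum_range_succ _ _
      have la := sigma_lt n a ha
      have lb := sigma_lt n b hb
      have hA : a n = 0 ∨ a n = 1 := by have := ha n; omega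
      have hB : b n = 0 ∨ b n = 1 := by have := hb n; omega
      have key : a n = b n ∧ sigma n a = sigma n b := by
        rcases hA with hA | hA <;> rcases hB with hB | hB <;>
          rw [hA] at e1 <;> rw [hB] at e2 <;> constructor <;> omega
      rcases Nat.lt_succ_iff_lt_or_eq.mp hl with h' | h'
      · exact ih key.2 l h'
      · rw [h']; exact key.1


lemma period_mul (a : ℕ → ℕ) (n : ℕ) (hper : ∀ l, a (l + n) = a l) :
    ∀ k x, a (x + n * k) = a x := by
  intro k
  induction k with
  | zero => simp
  | succ k ih =>
      intro x
      have h : x + n * (k+1) = (x + n * k) + n := by ring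
      rw [h, hper, ih]

lemma exists_shift (n : ℕ) (a : ℕ → ℕ) (hn : 1 ≤ n) (hper : ∀ l, a (l + n) = a l)
    (P : ℕ → Prop) (h : ∃ l < n, P (a l)) (s : ℕ) : ∃ l < n, P (a (l + s)) := by
  obtain ⟨l, hl, hP⟩ := h
  have hs : s % n < n := Nat.mod_lt _ hn
  have hdiv : n * (s / n) + s % n = s := Nat.div_add_mod s n
  by_cases hc : s % n ≤ l
  · refine ⟨l - s % n, by omega, ?_⟩
    have he : l - s % n + s = l + n * (s / n) := by omega
    rw [he, period_mul a n hper]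
    exact hP
  · refine ⟨l + n - s % n, by omega, ?_⟩
    have hmul : n * (s / n + 1) = n * (s / n) + n := by ring
    have he : l + n - s % n + s = l + n * (s / n + 1) := by omega
    rw [he, period_mul a n hper]
    exact hP

lemma sigma_step (n : ℕ) (a : ℕ → ℕ) (hper : ∀ l, a (l + n) = a l) (s : ℕ) :
    sigma n (fun l => a (l + s)) + a s * 2 ^ n =
      2 * sigma n (fun l => a (l + (s + 1))) + a s := by
  simp only [sigma]
  have h1 : ∑ l ∈ Finset.range (n+1), a (l + s) * 2 ^ l
      = (∑ l ∈ Finset.range n, a (l + s) * 2 ^ l) + a (n + s) * 2 ^ n :=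
    Finset.sum_range_succ _ _
  have h2 : ∑ l ∈ Finset.range (n+1), a (l + s) * 2 ^ l
      = (∑ l ∈ Finset.range n, a ((l+1) + s) * 2 ^ (l+1)) + a (0 + s) * 2 ^ 0 :=
    Finset.sum_range_succ' _ _
  have h3 : ∑ l ∈ Finset.range n, a ((l+1) + s) * 2 ^ (l+1)
      = 2 * ∑ l ∈ Finset.range n, a (l + (s+1)) * 2 ^ l := by
    rw [Finset.mul_sum]
    refine Finset.sum_congr rfl fun l _ => ?_
    have he : l + 1 + s = l + (s + 1) := by ring
    rw [he, pow_succ]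
    ring
  rw [h3] at h2
  have h4 : a (n + s) = a s := by rw [Nat.add_comm]; exact hper s
  rw [h4] at h1
  have h5 : a (0 + s) = a s := by rw [Nat.zero_add]
  rw [h5, pow_zero, mul_one] at h2
  omega

lemma two_pow_modeq (n : ℕ) : (2:ℕ) ^ n ≡ 1 [MOD 2 ^ n - 1] := by
  have h1 : 1 ≤ (2:ℕ) ^ n := Nat.one_le_two_pow
  have h2 : (2:ℕ) ^ n = (2 ^ n - 1) + 1 := by omega
  have h3 := Nat.add_mod_left (2 ^ n - 1) 1
  rw [← h2] at h3
  exact h3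

lemma step_modeq (n : ℕ) (a : ℕ → ℕ) (hper : ∀ l, a (l + n) = a l) (s : ℕ) :
    sigma n (fun l => a (l + s)) ≡ 2 * sigma n (fun l => a (l + (s + 1))) [MOD 2 ^ n - 1] := by
  have h := sigma_step n a hper s
  have h2 : a s * 2 ^ n ≡ a s * 1 [MOD 2 ^ n - 1] :=
    Nat.ModEq.mul_left _ (two_pow_modeq n)
  have h3 : sigma n (fun l => a (l + s)) + a s * 2 ^ n
      ≡ sigma n (fun l => a (l + s)) + a s [MOD 2 ^ n - 1] := by
    simpa using Nat.ModEq.add_left _ h2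
  rw [h] at h3
  exact (Nat.ModEq.add_right_cancel' _ h3).symm

lemma shift_modeq (n : ℕ) (a : ℕ → ℕ) (hper : ∀ l, a (l + n) = a l) :
    ∀ t s, sigma n (fun l => a (l + s)) ≡
      2 ^ t * sigma n (fun l => a (l + (s + t))) [MOD 2 ^ n - 1] := by
  intro t
  induction t with
  | zero =>
      intro s
      simp only [pow_zero, one_mul, Nat.add_zero]
      exact Nat.ModEq.refl _
  | succ t ih =>
      intro s
      have h1 := step_modeq n a hper s
      have h2 := Nat.ModEq.mul_left 2 (ih (s+1))
      have h3 : (fun l => a (l + (s + 1 + t))) = (fun l => a (l + (s + (t+1)))) := by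
        funext l; congr 1; omega
      rw [h3] at h2
      have h4 : 2 * (2 ^ t * sigma n (fun l => a (l + (s + (t+1)))))
          = 2 ^ (t+1) * sigma n (fun l => a (l + (s + (t+1)))) := by ring
      rw [h4] at h2
      exact h1.trans h2

lemma w2_chain (n : ℕ) (hn : 1 ≤ n) :
    ∀ t x y : ℕ, 1 ≤ x → x ≤ 2 ^ n - 2 → 1 ≤ y → y ≤ 2 ^ n - 2 →
      x ≡ 2 ^ t * y [MOD 2 ^ n - 1] → w2 x = w2 y := by
  intro t
  induction t with
  | zero =>
      intro x y hx1 hx2 hy1 hy2 h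
      have hp : 2 ≤ (2:ℕ) ^ n := by
        calc (2:ℕ) = 2 ^ 1 := (pow_one 2).symm
          _ ≤ 2 ^ n := Nat.pow_le_pow_right (by norm_num) hn
      rw [pow_zero, one_mul] at h
      have hx : x % (2 ^ n - 1) = x := Nat.mod_eq_of_lt (by omega)
      have hy : y % (2 ^ n - 1) = y := Nat.mod_eq_of_lt (by omega)
      rw [Nat.ModEq, hx, hy] at h
      rw [h]
  | succ t ih =>
      intro x y hx1 hx2 hy1 hy2 h
      have hp : (2:ℕ) ^ n = 2 * 2 ^ (n-1) := by
        rw [← pow_succ']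
        congr 1
        omega
      have hp1 : 1 ≤ (2:ℕ) ^ (n-1) := Nat.one_le_two_pow
      by_cases hc : 2 * y < 2 ^ n - 1
      · have h' : x ≡ 2 ^ t * (2 * y) [MOD 2 ^ n - 1] := by
          have he : (2:ℕ) ^ (t+1) * y = 2 ^ t * (2 * y) := by ring
          rw [← he]; exact h
        have hres := ih x (2*y) hx1 hx2 (by omega) (by omega) h'
        rw [hres, w2_two_mul]
      · set z := 2 * y - (2 ^ n - 1) with hzdef
        have hz1 : 1 ≤ z := by omega
        have hz2 : z ≤ 2 ^ n - 2 := by omega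
        have hzeq : 2 * y = z + (2 ^ n - 1) := by omega
        have hmod : z ≡ 2 * y [MOD 2 ^ n - 1] := by
          rw [Nat.ModEq, hzeq, Nat.add_mod_right]
        have h' : x ≡ 2 ^ t * z [MOD 2 ^ n - 1] := by
          have he : (2:ℕ) ^ (t+1) * y = 2 ^ t * (2 * y) := by ring
          rw [he] at h
          exact h.trans (Nat.ModEq.mul_left (2 ^ t) hmod.symm)
        have hw := ih x z hx1 hx2 hz1 hz2 h'
        have hr : y = 2 ^ (n-1) + (y - 2 ^ (n-1)) := by omega
        have hrlt : y - 2 ^ (n-1) < 2 ^ (n-1) := by omega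
        have hzr : z = 2 * (y - 2 ^ (n-1)) + 1 := by omega
        rw [hw, hzr, w2_two_mul_add_one, ← w2_pow_add (n-1) _ hrlt, ← hr]


lemma arithAC_formula (n : ℕ) (a : ℕ → ℕ) (τ : ℕ)
    (h2 : sigma n a ≤ 2 ^ n - 2)
    (h3 : 1 ≤ sigma n (fun l => a (l + τ)))
    (h4 : sigma n (fun l => a (l + τ)) ≤ 2 ^ n - 2) :
    arithAC n a τ = 2 * (w2 (if sigma n (fun l => a (l + τ)) < sigma n a
        then sigma n a - sigma n (fun l => a (l + τ))
        else 2 ^ n - 1 - (sigma n (fun l => a (l + τ)) - sigma n a)) : ℤ) - n := by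
  unfold arithAC
  by_cases hc : sigma n (fun l => a (l + τ)) < sigma n a
  · rw [if_pos hc, if_pos hc]
  · rw [if_neg hc, if_neg hc]
    have hcom := w2_compl n (sigma n (fun l => a (l + τ)) - sigma n a) (by omega)
    omega

theorem arithAC_shift_invariant (n : ℕ) (hn : 2 ≤ n) (a : ℕ → ℕ)
    (hbin : ∀ l, a l ≤ 1) (hper : ∀ l, a (l + n) = a l)
    (hnz : ∃ l < n, a l ≠ 0) (hno : ∃ l < n, a l ≠ 1)
    (t : ℕ) (ht1 : 1 ≤ t) (ht2 : t ≤ n - 1)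
    (τ : ℕ) (hτ1 : 1 ≤ τ) (hτ2 : τ ≤ n - 1)
    (hne : ∃ l < n, a (l + τ) ≠ a l) :
    arithAC n a τ = arithAC n (fun l => a (l + t)) τ := by
  have hn1 : 1 ≤ n := by omega
  have hM2 : 2 ≤ (2:ℕ) ^ n := by
    calc (2:ℕ) = 2 ^ 1 := (pow_one 2).symm
      _ ≤ 2 ^ n := Nat.pow_le_pow_right (by norm_num) hn1
  -- bounds for all shifts
  have hSpos : ∀ s : ℕ, 1 ≤ sigma n (fun l => a (l + s)) := fun s =>
    sigma_pos n _ (exists_shift n a hn1 hper (· ≠ 0) hnz s)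
  have hSle : ∀ s : ℕ, sigma n (fun l => a (l + s)) ≤ 2 ^ n - 2 := fun s =>
    sigma_le n _ (fun l => hbin _) (exists_shift n a hn1 hper (· ≠ 1) hno s)
  have hb1 : 1 ≤ sigma n a := sigma_pos n a hnz
  have hb2 : sigma n a ≤ 2 ^ n - 2 := sigma_le n a hbin hno
  -- abbreviations
  set d1 := sigma n a with hd1def
  set d2 := sigma n (fun l => a (l + τ)) with hd2def
  set e1 := sigma n (fun l => a (l + t)) with he1def
  set e2 := sigma n (fun l => a (l + τ + t)) with he2def
  have heq : (fun l => a (l + (τ + t))) = (fun l => a (l + τ + t)) := by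
    funext l; congr 1; omega
  have hd2b1 : 1 ≤ d2 := hSpos τ
  have hd2b2 : d2 ≤ 2 ^ n - 2 := hSle τ
  have he1b1 : 1 ≤ e1 := hSpos t
  have he1b2 : e1 ≤ 2 ^ n - 2 := hSle t
  have he2b1 : 1 ≤ e2 := by rw [he2def, ← heq]; exact hSpos (τ + t)
  have he2b2 : e2 ≤ 2 ^ n - 2 := by rw [he2def, ← heq]; exact hSle (τ + t)
  -- congruences
  have hc1 : d1 ≡ 2 ^ t * e1 [MOD 2 ^ n - 1] := by
    have h := shift_modeq n a hper t 0
    simpa [hd1def, he1def, sigma] using h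
  have hc2 : d2 ≡ 2 ^ t * e2 [MOD 2 ^ n - 1] := by
    have h := shift_modeq n a hper t τ
    rw [heq] at h
    exact h
  -- inequality of sigmas
  have hd : d1 ≠ d2 := by
    intro h
    obtain ⟨l, hl, hdiff⟩ := hne
    exact hdiff (sigma_inj (fun l => a (l + τ)) a (fun l => hbin _) hbin n h.symm l hl)
  have he : e1 ≠ e2 := by
    intro h
    rw [h] at hc1
    have h5 : d1 ≡ d2 [MOD 2 ^ n - 1] := hc1.trans hc2.symm
    have hx : d1 % (2 ^ n - 1) = d1 := Nat.mod_eq_of_lt (by omega)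
    have hy : d2 % (2 ^ n - 1) = d2 := Nat.mod_eq_of_lt (by omega)
    rw [Nat.ModEq, hx, hy] at h5
    exact hd h5
  -- the representatives
  set Da := if d2 < d1 then d1 - d2 else 2 ^ n - 1 - (d2 - d1) with hDadef
  set Db := if e2 < e1 then e1 - e2 else 2 ^ n - 1 - (e2 - e1) with hDbdef
  have hDa1 : 1 ≤ Da := by rw [hDadef]; split <;> omega
  have hDa2 : Da ≤ 2 ^ n - 2 := by rw [hDadef]; split <;> omega
  have hDb1 : 1 ≤ Db := by rw [hDbdef]; split <;> omega
  have hDb2 : Db ≤ 2 ^ n - 2 := by rw [hDbdef]; split <;> omega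
  have hDa : Da + d2 ≡ d1 [MOD 2 ^ n - 1] := by
    rw [hDadef]
    by_cases hc : d2 < d1
    · rw [if_pos hc]
      have h : d1 - d2 + d2 = d1 := by omega
      rw [h]
    · rw [if_neg hc]
      have h : 2 ^ n - 1 - (d2 - d1) + d2 = (2 ^ n - 1) + d1 := by omega
      rw [h, Nat.ModEq, Nat.add_mod_left]
  have hDb : Db + e2 ≡ e1 [MOD 2 ^ n - 1] := by
    rw [hDbdef]
    by_cases hc : e2 < e1
    · rw [if_pos hc]
      have h : e1 - e2 + e2 = e1 := by omega
      rw [h]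
    · rw [if_neg hc]
      have h : 2 ^ n - 1 - (e2 - e1) + e2 = (2 ^ n - 1) + e1 := by omega
      rw [h, Nat.ModEq, Nat.add_mod_left]
  -- the main congruence : Da ≡ 2^t Db
  have hmain : Da + d2 ≡ 2 ^ t * Db + d2 [MOD 2 ^ n - 1] := by
    have s1 : Da + d2 ≡ 2 ^ t * Db + 2 ^ t * e2 [MOD 2 ^ n - 1] := by
      have s2 : (2:ℕ) ^ t * (Db + e2) ≡ 2 ^ t * e1 [MOD 2 ^ n - 1] :=
        Nat.ModEq.mul_left _ hDb
      have s3 : (2:ℕ) ^ t * (Db + e2) = 2 ^ t * Db + 2 ^ t * e2 := by ring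
      rw [s3] at s2
      exact (hDa.trans hc1).trans s2.symm
    have s4 : 2 ^ t * Db + d2 ≡ 2 ^ t * Db + 2 ^ t * e2 [MOD 2 ^ n - 1] :=
      Nat.ModEq.add_left _ hc2
    exact s1.trans s4.symm
  have hcong : Da ≡ 2 ^ t * Db [MOD 2 ^ n - 1] := Nat.ModEq.add_right_cancel' _ hmain
  have hw : w2 Da = w2 Db := w2_chain n hn1 t Da Db hDa1 hDa2 hDb1 hDb2 hcong
  -- final rewriting
  have F1 := arithAC_formula n a τ hb2 hd2b1 hd2b2
  have F2 := arithAC_formula n (fun l => a (l + t)) τ he1b2 he2b1 he2b2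
  rw [F1, F2, ← hDadef]
  beta_reduce
  rw [← he2def, ← he1def, ← hDbdef, hw]
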